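/- Let d ≥ 2 be an integer and define g : (0,∞) → ℝ by g(t) = 1 for t ≤ 1 and g(t) = 1 − (1 − 1/t)^{(d−1)/2} for t > 1. Then g is not convex on (0,∞). -/
import Mathlib


open Real Set

/-- For an integer `d ≥ 2`, the function `g` with `g(t) = 1` for `t ≤ 1` and
`g(t) = 1 - (1 - 1/t)^{(d-1)/2}` for `t > 1` is not convex on `(0,∞)`. -/
theorem turning_bands_tent_deriv_not_convex (d : ℕ) (hd : 2 ≤ d) :
    ¬ ConvexOn ℝ (Set.Ioi 0)
      (fun t : ℝ => if t ≤ 1 then 1 else 1 - (1 - 1 / t) ^ (((d : ℝ) - 1) / 2)) := by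
  intro h
  have key := h.2 (show (1/2:ℝ) ∈ Set.Ioi 0 by norm_num)
    (show (3/2:ℝ) ∈ Set.Ioi 0 by norm_num)
    (by norm_num : (0:ℝ) ≤ 1/2) (by norm_num : (0:ℝ) ≤ 1/2) (by norm_num)
  simp only [smul_eq_mul] at key
  norm_num at key
  have hpos : (0:ℝ) < (1/3:ℝ) ^ (((d : ℝ) - 1) / 2) :=
    Real.rpow_pos_of_pos (by norm_num) _
  linarith
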